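/- Let X be a separable metric space, f : X → X a homeomorphism, and μ an f-invariant ergodic nonatomic Borel probability measure. If φ ∈ L¹(μ) satisfies ∫ φ dμ = 0, then for μ-almost every x ∈ X there is a strictly increasing sequence (nᵢ) of positive integers such that f^{nᵢ}(x) → x and ∑_{k=0}^{nᵢ−1} φ(f^k(x)) → 0 as i → ∞. -/

import Mathlib

open Filter Topology MeasureTheory

noncomputable section

/-- The plane ℝ². -/
abbrev V2 : Type := ℝ × ℝ

/-- Euclidean dot product on ℝ². -/
def dot (x y : V2) : ℝ := x.1 * y.1 + x.2 * y.2

/-- Euclidean norm on ℝ². -/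
def nrm (x : V2) : ℝ := Real.sqrt (dot x x)

/-- v^⊥ = (−v₂, v₁). -/
def perp (v : V2) : V2 := (-v.2, v.1)

/-- Inclusion of ℤ² into ℝ². -/
def intVec (u : ℤ × ℤ) : V2 := ((u.1 : ℝ), (u.2 : ℝ))

/-- `f` is a lift of a torus map: it commutes with all integer translations. -/
def IsLift (f : V2 → V2) : Prop := ∀ (z : V2) (u : ℤ × ℤ), f (z + intVec u) = f z + intVec u

/-- The Misiurewicz–Ziemian rotation set of `f`. -/
def RotSet (f : V2 → V2) : Set V2 :=
  {v | ∃ (n : ℕ → ℕ) (x : ℕ → V2), Tendsto n atTop atTop ∧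
    Tendsto (fun i => ((n i : ℝ))⁻¹ • (f^[n i] (x i) - x i)) atTop (𝓝 v)}

namespace AtkinsonAux

variable {α : Type*} [MeasurableSpace α] {μ : Measure α} {f : α → α} {g : α → ℝ}

lemma bs_measurable (hf : Measurable f) (hg : Measurable g) (n : ℕ) :
    Measurable (birkhoffSum f g n) := by
  unfold birkhoffSum
  exact Finset.measurable_sum _ fun k _ => hg.comp (hf.iterate k)

lemma bs_integrable (hf : MeasurePreserving f μ μ) (hg : Integrable g μ) (n : ℕ) :
    Integrable (birkhoffSum f g n) μ := by
  have : Integrable (fun x => ∑ k ∈ Finset.range n, g (f^[k] x)) μ :=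
    integrable_finset_sum _ fun k _ => ((hf.iterate k).integrable_comp hg.1).mpr hg
  exact this

lemma integral_comp_mp (hf : MeasurePreserving f μ μ) {h : α → ℝ}
    (hm : AEStronglyMeasurable h μ) : ∫ x, h (f x) ∂μ = ∫ x, h x ∂μ := by
  have hm' : AEStronglyMeasurable h (Measure.map f μ) := by rwa [hf.map_eq]
  rw [← integral_map hf.measurable.aemeasurable hm', hf.map_eq]

/-- Garsia's recursive maximal function. -/
def phiM (f : α → α) (g : α → ℝ) : ℕ → α → ℝ
  | 0 => fun _ => 0
  | (N+1) => fun x => max 0 (g x + phiM f g N (f x))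

lemma phiM_nonneg (N : ℕ) (x : α) : 0 ≤ phiM f g N x := by
  cases N <;> simp [phiM]

lemma phiM_measurable (hf : Measurable f) (hg : Measurable g) (N : ℕ) :
    Measurable (phiM f g N) := by
  induction N with
  | zero => simpa [phiM] using measurable_const
  | succ N ih => exact (measurable_const.max (hg.add (ih.comp hf)))

lemma phiM_integrable [IsProbabilityMeasure μ] (hf : MeasurePreserving f μ μ) (hgm : Measurable g) (hg : Integrable g μ) (N : ℕ) :
    Integrable (phiM f g N) μ := by
  induction N with
  | zero => simpa [phiM] using integrable_const (0:ℝ)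
  | succ N ih =>
      have h2 : Integrable (phiM f g N ∘ f) μ :=
        (hf.integrable_comp (phiM_measurable hf.measurable hgm N).aestronglyMeasurable).mpr ih
      have h3 := (integrable_const (0:ℝ)).sup (hg.add h2)
      have : Integrable (fun x => max 0 (g x + phiM f g N (f x))) μ := by
        simpa [Pi.sup_def, Function.comp] using h3
      exact this

lemma phiM_mono (N : ℕ) (x : α) : phiM f g N x ≤ phiM f g (N+1) x := by
  induction N generalizing x with
  | zero => simpa [phiM] using phiM_nonneg 1 x
  | succ N ih =>
      simp only [phiM]
      exact max_le_max le_rfl (add_le_add le_rfl (ih (f x)))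

lemma bs_le_phiM (N : ℕ) : ∀ k ≤ N, ∀ x : α, birkhoffSum f g k x ≤ phiM f g N x := by
  induction N with
  | zero => intro k hk x; interval_cases k; simp [phiM]
  | succ N ih =>
      intro k hk x
      rcases Nat.eq_zero_or_pos k with rfl | hk0
      · simpa using phiM_nonneg (N+1) x
      · obtain ⟨k, rfl⟩ := Nat.exists_eq_succ_of_ne_zero hk0.ne'
        rw [birkhoffSum_succ']
        calc g x + birkhoffSum f g k (f x) ≤ g x + phiM f g N (f x) := by
              linarith [ih k (by omega) (f x)]
          _ ≤ phiM f g (N+1) x := le_max_right _ _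

lemma abs_indicator_le {s : Set α} (x : α) : |s.indicator g x| ≤ |g x| := by
  by_cases hx : x ∈ s
  · rw [Set.indicator_of_mem hx]
  · rw [Set.indicator_of_notMem hx, abs_zero]; exact abs_nonneg _

/-- Maximal ergodic theorem, full-measure version. -/
theorem maximal (hf : MeasurePreserving f μ μ) (hgm : Measurable g) (hg : Integrable g μ)
    [IsProbabilityMeasure μ]
    (hE : ∀ᵐ x ∂μ, ∃ n, 0 < birkhoffSum f g n x) : 0 ≤ ∫ x, g x ∂μ := by
  set E : ℕ → Set α := fun N => {x | 0 < phiM f g N x} with hE_def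
  have hEm : ∀ N, MeasurableSet (E N) :=
    fun N => measurableSet_lt measurable_const (phiM_measurable hf.measurable hgm N)
  have hphi_mono : ∀ (x : α), Monotone (fun N => phiM f g N x) := fun x =>
    monotone_nat_of_le_succ (fun N => phiM_mono N x)
  have step : ∀ N, 0 ≤ ∫ x, (E N).indicator g x ∂μ := by
    intro N
    cases N with
    | zero => simp [hE_def, phiM]
    | succ N =>
      have hptw : ∀ x, phiM f g (N+1) x - phiM f g (N+1) (f x) ≤ (E (N+1)).indicator g x := by
        intro x
        by_cases hx : x ∈ E (N+1)
        · rw [Set.indicator_of_mem hx]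
          have hpos : 0 < phiM f g (N+1) x := hx
          have heq : phiM f g (N+1) x = g x + phiM f g N (f x) := by
            simp only [phiM] at hpos ⊢
            rcases max_choice 0 (g x + phiM f g N (f x)) with h | h
            · rw [h] at hpos; exact absurd hpos (lt_irrefl 0)
            · exact h
          rw [heq]
          linarith [phiM_mono (f := f) (g := g) N (f x)]
        · rw [Set.indicator_of_notMem hx]
          have h0 : phiM f g (N+1) x = 0 :=
            le_antisymm (not_lt.mp hx) (phiM_nonneg _ _)
          rw [h0]
          linarith [phiM_nonneg (f := f) (g := g) (N+1) (f x)]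
      have hint := phiM_integrable hf hgm hg (N+1)
      have hintf : Integrable (fun x => phiM f g (N+1) (f x)) μ :=
        (hf.integrable_comp (phiM_measurable hf.measurable hgm (N+1)).aestronglyMeasurable).mpr hint
      have hind : Integrable ((E (N+1)).indicator g) μ := hg.indicator (hEm (N+1))
      have h1 : ∫ x, (phiM f g (N+1) x - phiM f g (N+1) (f x)) ∂μ
          ≤ ∫ x, (E (N+1)).indicator g x ∂μ :=
        integral_mono (hint.sub hintf) hind hptw
      have h2 : ∫ x, (phiM f g (N+1) x - phiM f g (N+1) (f x)) ∂μ = 0 := by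
        rw [integral_sub hint hintf, integral_comp_mp hf hint.1, sub_self]
      linarith
  -- pass to the limit
  have hcover : ∀ᵐ x ∂μ, x ∈ ⋃ N, E N := by
    filter_upwards [hE] with x hx
    obtain ⟨n, hn⟩ := hx
    exact Set.mem_iUnion.mpr ⟨n, lt_of_lt_of_le hn (bs_le_phiM n n le_rfl x)⟩
  have hptconv : ∀ x, Tendsto (fun N => (E N).indicator g x) atTop
      (𝓝 ((⋃ N, E N).indicator g x)) := by
    intro x
    by_cases hx : x ∈ ⋃ N, E N
    · obtain ⟨N₀, hN₀⟩ := Set.mem_iUnion.mp hx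
      have hN₀' : 0 < phiM f g N₀ x := hN₀
      rw [Set.indicator_of_mem hx]
      have hev : ∀ᶠ N in atTop, (E N).indicator g x = g x := by
        filter_upwards [eventually_ge_atTop N₀] with N hN
        have hmem : x ∈ E N := lt_of_lt_of_le hN₀' (hphi_mono x hN)
        exact Set.indicator_of_mem hmem g
      exact Tendsto.congr' (hev.mono fun N h => h.symm) (tendsto_const_nhds (x := g x))
    · have hnx : ∀ N, x ∉ E N := fun N hN => hx (Set.mem_iUnion.mpr ⟨N, hN⟩)
      rw [Set.indicator_of_notMem hx]
      exact (tendsto_const_nhds (x := (0:ℝ))).congr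
        (fun N => (Set.indicator_of_notMem (hnx N) g).symm)
  have htend : Tendsto (fun N => ∫ x, (E N).indicator g x ∂μ) atTop
      (𝓝 (∫ x, (⋃ N, E N).indicator g x ∂μ)) := by
    refine tendsto_integral_of_dominated_convergence (fun x => |g x|)
      (fun N => ((hgm.indicator (hEm N)).aestronglyMeasurable)) hg.abs ?_ ?_
    · intro N
      filter_upwards with x
      rw [Real.norm_eq_abs]
      exact abs_indicator_le x
    · exact Eventually.of_forall hptconv
  have hfinal : ∫ x, (⋃ N, E N).indicator g x ∂μ = ∫ x, g x ∂μ := by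
    apply integral_congr_ae
    filter_upwards [hcover] with x hx
    exact Set.indicator_of_mem hx g
  rw [← hfinal]
  exact ge_of_tendsto' htend step

/-- One-sided Birkhoff bound. -/
theorem bddAbove_ae (hErg : Ergodic f μ) (hgm : Measurable g) (hg : Integrable g μ)
    [IsProbabilityMeasure μ] {c : ℝ} (hc : ∫ x, g x ∂μ < c) :
    ∀ᵐ x ∂μ, BddAbove (Set.range fun n : ℕ => birkhoffSum f g n x - n * c) := by
  set u : α → ℕ → ℝ := fun x n => birkhoffSum f g n x - n * c with hu
  set B : Set α := {x | BddAbove (Set.range (u x))} with hB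
  have hBalt : B = ⋃ C : ℕ, ⋂ n : ℕ, {x | u x n ≤ C} := by
    ext x
    simp only [hB, Set.mem_iUnion, Set.mem_iInter, Set.mem_setOf_eq]
    constructor
    · rintro ⟨b, hb⟩
      obtain ⟨C, hC⟩ := exists_nat_ge b
      exact ⟨C, fun n => le_trans (hb (Set.mem_range_self n)) hC⟩
    · rintro ⟨C, hC⟩
      exact ⟨C, fun y hy => by obtain ⟨n, rfl⟩ := hy; exact hC n⟩
  have hum : ∀ n : ℕ, Measurable (fun x => u x n) := fun n =>
    (bs_measurable hErg.measurable hgm n).sub measurable_const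
  have hBmeas : MeasurableSet B := by
    rw [hBalt]
    exact MeasurableSet.iUnion fun C => MeasurableSet.iInter fun n =>
      measurableSet_le (hum n) measurable_const
  have hinv : f ⁻¹' B = B := by
    ext x
    simp only [Set.mem_preimage, hB, Set.mem_setOf_eq]
    have hrel : ∀ n : ℕ, u (f x) n = u x (n+1) + (c - g x) := by
      intro n
      simp only [hu]
      rw [birkhoffSum_succ' f g n x]
      push_cast
      ring
    constructor
    · rintro ⟨b, hb⟩
      refine ⟨max (u x 0) (b - (c - g x)), ?_⟩
      rintro y ⟨n, rfl⟩
      cases n with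
      | zero => exact le_max_left _ _
      | succ n =>
          have h1 := hb (Set.mem_range_self n)
          rw [hrel n] at h1
          exact le_trans (by linarith) (le_max_right _ _)
    · rintro ⟨b, hb⟩
      refine ⟨b + (c - g x), ?_⟩
      rintro y ⟨n, rfl⟩
      rw [hrel n]
      have h1 := hb (Set.mem_range_self (n+1))
      linarith
  rcases hErg.ae_empty_or_univ hBmeas hinv with hB0 | hB1
  · exfalso
    set ψ : α → ℝ := fun x => g x - c with hψ
    have hψm : Measurable ψ := hgm.sub measurable_const
    have hψint : Integrable ψ μ := hg.sub (integrable_const c)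
    have hbsψ : ∀ (n : ℕ) (x : α), birkhoffSum f ψ n x = birkhoffSum f g n x - n * c := by
      intro n x
      simp only [birkhoffSum, hψ, Finset.sum_sub_distrib, Finset.sum_const, Finset.card_range,
        nsmul_eq_mul]
    have hBc : ∀ᵐ x ∂μ, x ∉ B := by
      have h0 : μ B = 0 := ae_eq_empty.mp hB0
      exact measure_eq_zero_iff_ae_notMem.mp h0
    have hfull : ∀ᵐ x ∂μ, ∃ n, 0 < birkhoffSum f ψ n x := by
      filter_upwards [hBc] with x hx
      by_contra hcon
      push_neg at hcon
      exact hx ⟨0, by rintro y ⟨n, rfl⟩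
                      have := hcon n
                      rw [hbsψ n x] at this
                      simpa [hu] using this⟩
    have hmax := maximal hErg.toMeasurePreserving hψm hψint hfull
    have hintψ : ∫ x, ψ x ∂μ = ∫ x, g x ∂μ - c := by
      rw [hψ]
      rw [integral_sub hg (integrable_const c), integral_const]
      simp
    rw [hintψ] at hmax
    linarith
  · exact Filter.eventuallyEq_univ.mp hB1

/-- Birkhoff ergodic theorem, ergodic case. -/
theorem birkhoff (hErg : Ergodic f μ) (hgm : Measurable g) (hg : Integrable g μ)
    [IsProbabilityMeasure μ] :
    ∀ᵐ x ∂μ, Tendsto (fun n : ℕ => birkhoffSum f g n x / n) atTop (𝓝 (∫ x, g x ∂μ)) := by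
  set I := ∫ x, g x ∂μ with hI
  have hbsneg : ∀ (n : ℕ) (x : α), birkhoffSum f (fun y => -g y) n x = -birkhoffSum f g n x := by
    intro n x
    simp [birkhoffSum, Finset.sum_neg_distrib]
  have h1 : ∀ m : ℕ, ∀ᵐ x ∂μ,
      BddAbove (Set.range fun n : ℕ => birkhoffSum f g n x - n * (I + 1/(m+1))) := by
    intro m
    apply bddAbove_ae hErg hgm hg
    have : (0:ℝ) < 1/(m+1) := by positivity
    linarith
  have h2 : ∀ m : ℕ, ∀ᵐ x ∂μ,
      BddAbove (Set.range fun n : ℕ => birkhoffSum f (fun y => -g y) n x - n * (-I + 1/(m+1))) := by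
    intro m
    apply bddAbove_ae hErg hgm.neg hg.neg
    have h0 : ∫ x, -g x ∂μ = -I := by rw [integral_neg]
    have : (0:ℝ) < 1/(m+1) := by positivity
    rw [show (∫ x, (-g) x ∂μ) = -I from h0]
    linarith
  filter_upwards [ae_all_iff.mpr h1, ae_all_iff.mpr h2] with x hx1 hx2
  rw [Metric.tendsto_atTop]
  intro ε hε
  obtain ⟨m, hm⟩ := exists_nat_one_div_lt (half_pos hε)
  set δ : ℝ := 1/((m:ℝ)+1) with hδdef
  have hδ : δ < ε/2 := hm
  obtain ⟨b₁, hb₁⟩ := hx1 m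
  obtain ⟨b₂, hb₂⟩ := hx2 m
  set b : ℝ := max b₁ b₂ with hbdef
  obtain ⟨N, hN⟩ := exists_nat_gt (max (2*b/ε) 1)
  refine ⟨N, fun n hn => ?_⟩
  have hnN : ((N:ℝ)) ≤ n := Nat.cast_le.mpr hn
  have hn1 : (1:ℝ) ≤ n := le_trans (le_of_lt (lt_of_le_of_lt (le_max_right _ _) hN)) hnN
  have hpos : (0:ℝ) < n := lt_of_lt_of_le one_pos hn1
  have hnb : b < n * ε / 2 := by
    have h3 : 2*b/ε < (n:ℝ) := lt_of_lt_of_le (lt_of_le_of_lt (le_max_left _ _) hN) hnN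
    rw [div_lt_iff₀ hε] at h3
    linarith
  set S := birkhoffSum f g n x with hS
  have hub1 : S - n * (I + δ) ≤ b := le_trans (hb₁ (Set.mem_range_self n)) (le_max_left _ _)
  have hub2 : -S - n * (-I + δ) ≤ b := by
    have := hb₂ (Set.mem_range_self n)
    rw [hbsneg n x] at this
    exact le_trans this (le_max_right _ _)
  have key : |S - n * I| < n * ε := by
    rw [abs_lt]
    constructor <;> nlinarith
  rw [Real.dist_eq]
  have heq : S / n - I = (S - n * I) / n := by field_simp
  rw [heq, abs_div, abs_of_pos hpos, div_lt_iff₀ hpos]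
  linarith

/-- Growth control from Cesàro convergence to 0. -/
lemma growth_bound {u : ℕ → ℝ} (hu0 : u 0 = 0)
    (h : Tendsto (fun n : ℕ => u n / n) atTop (𝓝 0)) {δ : ℝ} (hδ : 0 < δ) :
    ∃ C : ℝ, 0 ≤ C ∧ ∀ k : ℕ, |u k| ≤ δ * k + C := by
  rw [Metric.tendsto_atTop] at h
  obtain ⟨K, hK⟩ := h δ hδ
  set C : ℝ := (Finset.range (K+1)).sup' (by simp) (fun k => |u k|) with hC
  have hCnn : 0 ≤ C :=
    le_trans (abs_nonneg (u 0))
      (Finset.le_sup' (fun k => |u k|) (by simp : 0 ∈ Finset.range (K+1)))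
  refine ⟨C, hCnn, ?_⟩
  intro k
  rcases le_or_gt k K with hk | hk
  · have : |u k| ≤ C :=
      Finset.le_sup' (fun k => |u k|) (Finset.mem_range.mpr (by omega : k < K+1))
    have hknn : (0:ℝ) ≤ δ * k := by positivity
    linarith
  · have hk1 : 1 ≤ k := by omega
    have hkpos : (0:ℝ) < k := by exact_mod_cast hk1
    have := hK k (by omega)
    rw [Real.dist_eq, sub_zero, abs_div, abs_of_pos hkpos, div_lt_iff₀ hkpos] at this
    nlinarith
/-- Counting lemma for `ε`-separated families. -/
lemma sep_count {ε M : ℝ} (hε : 0 < ε) (hM : 0 ≤ M) (t : Finset ℕ) (v : ℕ → ℝ)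
    (hsep : ∀ j ∈ t, ∀ k ∈ t, j ≠ k → ε ≤ |v j - v k|)
    (hbd : ∀ j ∈ t, |v j| ≤ M) :
    (t.card : ℝ) ≤ 2*M/ε + 1 := by
  classical
  set ι : ℕ → ℤ := fun j => ⌊(v j + M)/ε⌋ with hι
  have hinj : Set.InjOn ι t := by
    intro j hj k hk hjk
    by_contra hne
    have h1 : ε ≤ |v j - v k| := hsep j hj k hk hne
    have h2 : |(v j + M)/ε - (v k + M)/ε| < 1 := Int.abs_sub_lt_one_of_floor_eq_floor hjk
    rw [div_sub_div_same] at h2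
    have : (v j + M) - (v k + M) = v j - v k := by ring
    rw [this, abs_div, abs_of_pos hε, div_lt_one hε] at h2
    linarith
  have himg : t.image ι ⊆ Finset.Icc (0:ℤ) ⌊2*M/ε⌋ := by
    intro z hz
    obtain ⟨j, hj, rfl⟩ := Finset.mem_image.mp hz
    have hb := hbd j hj
    have h1 : 0 ≤ (v j + M)/ε := by
      apply div_nonneg _ hε.le
      have := abs_le.mp hb
      linarith [this.1]
    have hv2 : v j + M ≤ 2*M := by linarith [(abs_le.mp hb).2]
    have h2 : (v j + M)/ε ≤ 2*M/ε := by gcongr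
    rw [Finset.mem_Icc]
    exact ⟨Int.floor_nonneg.mpr h1, Int.floor_le_floor h2⟩
  have hcard : t.card = (t.image ι).card := (Finset.card_image_of_injOn hinj).symm
  have h3 : (t.image ι).card ≤ (Finset.Icc (0:ℤ) ⌊2*M/ε⌋).card := Finset.card_le_card himg
  have h4 : (Finset.Icc (0:ℤ) ⌊2*M/ε⌋).card = (⌊2*M/ε⌋ + 1).toNat := by
    rw [Int.card_Icc]; norm_num
  have h5 : ((⌊2*M/ε⌋ + 1).toNat : ℝ) ≤ 2*M/ε + 1 := by
    have hnn : (0:ℤ) ≤ ⌊2*M/ε⌋ + 1 := by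
      have : (0:ℝ) ≤ 2*M/ε := by positivity
      have := Int.floor_nonneg.mpr this
      omega
    have hcast : ((⌊2*M/ε⌋ + 1).toNat : ℝ) = ((⌊2*M/ε⌋ : ℝ) + 1) := by
      have h6 := Int.toNat_of_nonneg hnn
      exact_mod_cast congrArg (Int.cast : ℤ → ℝ) h6
    rw [hcast]
    have := Int.floor_le (2*M/ε)
    linarith
  calc (t.card : ℝ) = ((t.image ι).card : ℝ) := by rw [hcard]
    _ ≤ ((Finset.Icc (0:ℤ) ⌊2*M/ε⌋).card : ℝ) := by exact_mod_cast h3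
    _ = ((⌊2*M/ε⌋ + 1).toNat : ℝ) := by rw [h4]
    _ ≤ 2*M/ε + 1 := h5

/-- Atkinson's lemma. -/
theorem atkinson (hErg : Ergodic f μ) (hgm : Measurable g) (hg : Integrable g μ)
    [IsProbabilityMeasure μ] (hmean : ∫ x, g x ∂μ = 0)
    {A : Set α} (hA : MeasurableSet A) {ε : ℝ} (hε : 0 < ε) :
    ∀ᵐ x ∂μ, x ∈ A → ∃ n, 1 ≤ n ∧ f^[n] x ∈ A ∧ |birkhoffSum f g n x| < ε := by
  classical
  set B : Set α :=
    A ∩ {x | ∀ n : ℕ, 1 ≤ n → f^[n] x ∈ A → ε ≤ |birkhoffSum f g n x|} with hBdef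
  have hBmeas : MeasurableSet B := by
    apply hA.inter
    have : {x | ∀ n : ℕ, 1 ≤ n → f^[n] x ∈ A → ε ≤ |birkhoffSum f g n x|}
        = ⋂ n : ℕ, {x | 1 ≤ n → f^[n] x ∈ A → ε ≤ |birkhoffSum f g n x|} := by
      ext y; simp [Set.mem_iInter]
    rw [this]
    refine MeasurableSet.iInter fun n => ?_
    by_cases hn : 1 ≤ n
    · have : {x | 1 ≤ n → f^[n] x ∈ A → ε ≤ |birkhoffSum f g n x|}
          = (f^[n] ⁻¹' A)ᶜ ∪ {x | ε ≤ |birkhoffSum f g n x|} := by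
        ext y; simp [hn, imp_iff_not_or]
      rw [this]
      exact ((hErg.measurable.iterate n hA).compl).union
        (measurableSet_le measurable_const (bs_measurable hErg.measurable hgm n).abs)
    · have : {x | 1 ≤ n → f^[n] x ∈ A → ε ≤ |birkhoffSum f g n x|} = Set.univ := by
        ext y; simp [hn]
      rw [this]; exact MeasurableSet.univ
  suffices hB0 : μ B = 0 by
    filter_upwards [measure_eq_zero_iff_ae_notMem.mp hB0] with x hx hxA
    by_contra hcon
    push_neg at hcon
    exact hx ⟨hxA, fun n hn hfn => hcon n hn hfn⟩
  by_contra hB0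
  -- Birkhoff data
  have hInd_m : Measurable (B.indicator (1 : α → ℝ)) := measurable_one.indicator hBmeas
  have hInd_i : Integrable (B.indicator (1 : α → ℝ)) μ :=
    (integrable_const (1:ℝ)).indicator hBmeas
  have hIB : ∫ x, B.indicator 1 x ∂μ = (μ B).toReal := integral_indicator_one hBmeas
  set β : ℝ := (μ B).toReal with hβ
  have hβpos : 0 < β := ENNReal.toReal_pos hB0 (measure_ne_top μ B)
  have hbk1 := birkhoff hErg hgm hg
  have hbk2 := birkhoff hErg hInd_m hInd_i
  rw [hmean] at hbk1
  rw [hIB] at hbk2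
  -- pick a point in B where both Birkhoff conclusions hold
  obtain ⟨x, hxB, hx1, hx2⟩ : ∃ x, x ∈ B ∧
      Tendsto (fun n : ℕ => birkhoffSum f g n x / n) atTop (𝓝 0) ∧
      Tendsto (fun n : ℕ => birkhoffSum f (B.indicator (1:α→ℝ)) n x / n) atTop (𝓝 β) := by
    have hae := hbk1.and hbk2
    by_contra hcon
    push_neg at hcon
    have hsub : B ⊆ {y | ¬ (Tendsto (fun n : ℕ => birkhoffSum f g n y / n) atTop (𝓝 0) ∧
        Tendsto (fun n : ℕ => birkhoffSum f (B.indicator (1:α→ℝ)) n y / n) atTop (𝓝 β))} := by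
      intro y hy
      simp only [Set.mem_setOf_eq]
      rintro ⟨h1, h2⟩
      exact (hcon y hy h1) h2
    exact hB0 (measure_mono_null hsub (ae_iff.mp hae))
  -- growth bound for the sums
  set δ : ℝ := ε * β / 8 with hδdef
  have hδpos : 0 < δ := by positivity
  obtain ⟨C, hC0, hCb⟩ := growth_bound (by simp : birkhoffSum f g 0 x = 0) hx1 hδpos
  -- counting
  have hcount : ∀ n : ℕ, birkhoffSum f (B.indicator 1) n x
      = (((Finset.range n).filter (fun k => f^[k] x ∈ B)).card : ℝ) := by
    intro n
    simp only [birkhoffSum, Set.indicator_apply, Pi.one_apply]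
    rw [Finset.sum_boole]
  -- separation of sums at return times
  have hsep : ∀ n : ℕ, ∀ j ∈ (Finset.range n).filter (fun k => f^[k] x ∈ B),
      ∀ k ∈ (Finset.range n).filter (fun k => f^[k] x ∈ B), j ≠ k →
      ε ≤ |birkhoffSum f g j x - birkhoffSum f g k x| := by
    have haux : ∀ j k : ℕ, j < k → f^[j] x ∈ B → f^[k] x ∈ B →
        ε ≤ |birkhoffSum f g k x - birkhoffSum f g j x| := by
      intro j k hjk hj hk
      set m := k - j with hm
      have hm1 : 1 ≤ m := by omega
      have hiter : f^[m] (f^[j] x) = f^[k] x := by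
        rw [← Function.iterate_add_apply]
        congr 1
        omega
      have hmem : f^[m] (f^[j] x) ∈ A := by rw [hiter]; exact hk.1
      have hB2 := hj.2 m hm1 hmem
      have hadd : birkhoffSum f g k x
          = birkhoffSum f g j x + birkhoffSum f g m (f^[j] x) := by
        have := birkhoffSum_add f g j m x
        rw [show j + m = k by omega] at this
        exact this
      rw [hadd]
      simpa using hB2
    intro n j hj k hk hjk
    rw [Finset.mem_filter] at hj hk
    rcases lt_or_gt_of_ne hjk with h | h
    · rw [abs_sub_comm]
      exact haux j k h hj.2 hk.2
    · exact haux k j h hk.2 hj.2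
  -- choose a large n and derive a contradiction
  rw [Metric.tendsto_atTop] at hx2
  obtain ⟨N₁, hN₁⟩ := hx2 (β/2) (by positivity)
  set M₀ : ℕ := ⌈(8*C/ε + 4)/β⌉₊ with hM₀
  set n : ℕ := max N₁ M₀ + 1 with hn
  have hnN₁ : N₁ ≤ n := Nat.le_succ_of_le (le_max_left _ _)
  have hnpos : (0:ℝ) < n := by positivity
  have hngt : (8*C/ε + 4)/β < (n:ℝ) := by
    have h1 : (8*C/ε + 4)/β ≤ (M₀ : ℝ) := Nat.le_ceil _
    have h2 : (M₀ : ℝ) + 1 ≤ (n : ℝ) := by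
      exact_mod_cast Nat.succ_le_succ (le_max_right N₁ M₀)
    linarith
  set t := (Finset.range n).filter (fun k => f^[k] x ∈ B) with ht
  -- lower bound on card t
  have hlow : β/2 * n < (t.card : ℝ) := by
    have hd := hN₁ n hnN₁
    rw [hcount n, Real.dist_eq, abs_lt] at hd
    have h3 : β/2 < (t.card : ℝ)/n := by linarith [hd.1]
    exact (lt_div_iff₀ hnpos).mp h3
  -- upper bound via sep_count
  have hup : (t.card : ℝ) ≤ 2*(δ*n + C)/ε + 1 := by
    apply sep_count hε (by positivity) t (fun k => birkhoffSum f g k x) (hsep n)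
    intro j hj
    rw [ht, Finset.mem_filter, Finset.mem_range] at hj
    have hjn : (j:ℝ) ≤ n := by exact_mod_cast hj.1.le
    have := hCb j
    nlinarith
  have harith : 2*(δ*(n:ℝ) + C)/ε = β*(n:ℝ)/4 + 2*C/ε := by
    rw [hδdef]
    field_simp
    ring
  rw [harith] at hup
  have hβn : 8*C/ε + 4 < β*(n:ℝ) := by
    rw [div_lt_iff₀ hβpos] at hngt
    linarith
  have hlow' : β * (n:ℝ) / 2 < (t.card : ℝ) := by
    have : β/2 * (n:ℝ) = β * (n:ℝ)/2 := by ring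
    rwa [this] at hlow
  have h4 : 8*C/ε = 4*(2*C/ε) := by ring
  linarith [hlow', hup, hβn, h4]

end AtkinsonAux

open AtkinsonAux

/-- Corollary of Atkinson's lemma for a homeomorphism of a separable metric space with an
ergodic nonatomic invariant Borel probability measure. -/
theorem stmt5 {X : Type*} [MetricSpace X] [TopologicalSpace.SeparableSpace X]
    [MeasurableSpace X] [BorelSpace X]
    (f : X ≃ X) (hf : Continuous ⇑f) (hf' : Continuous ⇑f.symm)
    (μ : Measure X) [IsProbabilityMeasure μ] [MeasureTheory.NullSingletonClass μ]
    (hErg : Ergodic ⇑f μ)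
    (φ : X → ℝ) (hφ : Integrable φ μ) (hmean : ∫ x, φ x ∂μ = 0) :
    ∀ᵐ x ∂μ, ∃ n : ℕ → ℕ, StrictMono n ∧ (∀ i, 1 ≤ n i) ∧
      Tendsto (fun i => (⇑f)^[n i] x) atTop (𝓝 x) ∧
      Tendsto (fun i => ∑ k ∈ Finset.range (n i), φ ((⇑f)^[k] x)) atTop (𝓝 (0 : ℝ)) := by
  have : SecondCountableTopology X :=
    UniformSpace.secondCountable_of_separable X
  -- replace φ by a measurable representative g
  set g : X → ℝ := hφ.1.mk φ with hgdef
  have hgm : Measurable g := hφ.1.stronglyMeasurable_mk.measurable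
  have hae : φ =ᵐ[μ] g := hφ.1.ae_eq_mk
  have hg : Integrable g μ := hφ.congr hae
  have hmean' : ∫ x, g x ∂μ = 0 := by rw [← integral_congr_ae hae, hmean]
  have heq : ∀ᵐ x ∂μ, ∀ k : ℕ, φ ((⇑f)^[k] x) = g ((⇑f)^[k] x) := by
    rw [ae_all_iff]
    intro k
    have hmp := hErg.toMeasurePreserving.iterate k
    have h1 : φ ∘ (⇑f)^[k] =ᵐ[μ] g ∘ (⇑f)^[k] := by
      apply ae_eq_comp hmp.measurable.aemeasurable
      rwa [hmp.map_eq]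
    exact h1
  -- countable basis
  obtain ⟨b, hbc, _, hbb⟩ := TopologicalSpace.exists_countable_basis X
  have hmain : ∀ᵐ x ∂μ, ∀ U ∈ b, ∀ j : ℕ, (⇑f)^[j] x ∈ U → ∀ m : ℕ,
      ∃ n, 1 ≤ n ∧ (⇑f)^[n] ((⇑f)^[j] x) ∈ U ∧
        |birkhoffSum ⇑f g n ((⇑f)^[j] x)| < 1/((m:ℝ)+1) := by
    rw [ae_ball_iff hbc]
    intro U hU
    rw [ae_all_iff]
    intro j
    have hQ : ∀ᵐ y ∂μ, y ∈ U → ∀ m : ℕ,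
        ∃ n, 1 ≤ n ∧ (⇑f)^[n] y ∈ U ∧ |birkhoffSum ⇑f g n y| < 1/((m:ℝ)+1) := by
      have h1 : ∀ᵐ y ∂μ, ∀ m : ℕ, y ∈ U →
          ∃ n, 1 ≤ n ∧ (⇑f)^[n] y ∈ U ∧ |birkhoffSum ⇑f g n y| < 1/((m:ℝ)+1) := by
        rw [ae_all_iff]
        intro m
        exact atkinson hErg hgm hg hmean' ((hbb.isOpen hU).measurableSet)
          (by positivity : (0:ℝ) < 1/((m:ℝ)+1))
      filter_upwards [h1] with y hy hyU m
      exact hy m hyU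
    exact ((hErg.toMeasurePreserving.iterate j).quasiMeasurePreserving.tendsto_ae).eventually hQ
  filter_upwards [hmain, heq] with x hx hxeq
  -- key claim
  have key : ∀ (N : ℕ) (r ε' : ℝ), 0 < r → 0 < ε' →
      ∃ n, N < n ∧ dist ((⇑f)^[n] x) x < r ∧ |birkhoffSum ⇑f g n x| < ε' := by
    intro N r ε' hr hε'
    obtain ⟨U, hUb, hxU, hUsub⟩ :=
      hbb.exists_subset_of_mem_open (Metric.mem_ball_self hr) Metric.isOpen_ball
    have claim : ∀ j : ℕ, ∃ m, j ≤ m ∧ 1 ≤ m ∧ (⇑f)^[m] x ∈ U ∧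
        |birkhoffSum ⇑f g m x| < ε' * (1 - (1/2)^(j+1)) := by
      intro j
      induction j with
      | zero =>
          obtain ⟨m', hm'⟩ := exists_nat_one_div_lt (by positivity : (0:ℝ) < ε'/2)
          obtain ⟨n, hn1, hnU, hnS⟩ := hx U hUb 0 (by simpa using hxU) m'
          refine ⟨n, Nat.zero_le n, hn1, by simpa using hnU, ?_⟩
          have : |birkhoffSum ⇑f g n x| < ε'/2 := by
            simp only [Function.iterate_zero, id_eq] at hnS
            exact lt_trans hnS hm'
          have h2 : ε' * (1 - (1/2:ℝ)^(0+1)) = ε'/2 := by rw [zero_add, pow_one]; ring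
          rw [h2]
          exact this
      | succ j ih =>
          obtain ⟨m, hjm, hm1, hmU, hmS⟩ := ih
          obtain ⟨m', hm'⟩ :=
            exists_nat_one_div_lt (by positivity : (0:ℝ) < ε' * (1/2)^(j+2))
          obtain ⟨n, hn1, hnU, hnS⟩ := hx U hUb m hmU m'
          refine ⟨m + n, by omega, by omega, ?_, ?_⟩
          · rw [Nat.add_comm m n, Function.iterate_add_apply]
            exact hnU
          · have hadd := birkhoffSum_add (⇑f) g m n x
            have habs : |birkhoffSum ⇑f g (m+n) x|
                ≤ |birkhoffSum ⇑f g m x| + |birkhoffSum ⇑f g n ((⇑f)^[m] x)| := by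
              rw [hadd]; exact abs_add_le _ _
            have h3 : |birkhoffSum ⇑f g n ((⇑f)^[m] x)| < ε' * (1/2)^(j+2) :=
              lt_trans hnS hm'
            have h4 : ε' * (1 - (1/2:ℝ)^(j+1)) + ε' * (1/2)^(j+2)
                ≤ ε' * (1 - (1/2:ℝ)^(j+1+1)) := by
              have : (1/2:ℝ)^(j+2) = (1/2:ℝ)^(j+1) / 2 := by ring
              nlinarith [pow_pos (by norm_num : (0:ℝ) < 1/2) (j+1)]
            linarith
    obtain ⟨m, hjm, hm1, hmU, hmS⟩ := claim (N+1)
    refine ⟨m, by omega, ?_, ?_⟩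
    · have := hUsub hmU
      rwa [Metric.mem_ball] at this
    · have h5 : ε' * (1 - (1/2:ℝ)^(N+1+1)) ≤ ε' := by
        nlinarith [pow_pos (by norm_num : (0:ℝ) < 1/2) (N+2)]
      linarith
  -- build the sequence
  have key' : ∀ (N i : ℕ), ∃ n, N < n ∧ dist ((⇑f)^[n] x) x < 1/((i:ℝ)+1) ∧
      |birkhoffSum ⇑f g n x| < 1/((i:ℝ)+1) :=
    fun N i => key N _ _ (by positivity) (by positivity)
  choose F hF1 hF2 hF3 using key'
  set seq : ℕ → ℕ := fun i => Nat.rec (F 0 0) (fun i prev => F prev (i+1)) i with hseq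
  have hseq0 : seq 0 = F 0 0 := rfl
  have hseqS : ∀ i, seq (i+1) = F (seq i) (i+1) := fun i => rfl
  have hmono : StrictMono seq := by
    apply strictMono_nat_of_lt_succ
    intro i
    rw [hseqS i]
    exact hF1 (seq i) (i+1)
  have hprop : ∀ i, dist ((⇑f)^[seq i] x) x < 1/((i:ℝ)+1) ∧
      |birkhoffSum ⇑f g (seq i) x| < 1/((i:ℝ)+1) := by
    intro i
    cases i with
    | zero => exact ⟨hF2 0 0, hF3 0 0⟩
    | succ i => rw [hseqS i]; exact ⟨hF2 (seq i) (i+1), hF3 (seq i) (i+1)⟩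
  refine ⟨seq, hmono, ?_, ?_, ?_⟩
  · intro i
    have h0 : 1 ≤ seq 0 := hF1 0 0
    exact le_trans h0 (hmono.monotone (Nat.zero_le i))
  · rw [tendsto_iff_dist_tendsto_zero]
    apply squeeze_zero (fun i => dist_nonneg) (fun i => (hprop i).1.le)
    exact tendsto_one_div_add_atTop_nhds_zero_nat
  · have hsum : ∀ i, ∑ k ∈ Finset.range (seq i), φ ((⇑f)^[k] x)
        = birkhoffSum ⇑f g (seq i) x := by
      intro i
      exact Finset.sum_congr rfl fun k _ => hxeq k
    simp only [hsum]
    apply squeeze_zero_norm (fun i => ?_) tendsto_one_div_add_atTop_nhds_zero_nat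
    rw [Real.norm_eq_abs]
    exact (hprop i).2.le
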